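/- Let ν>0 and ζ>0, and set g = (1−(2+ν)ζ)/2. Define the infinite lower-bidiagonal real matrix J by J_{1,1} = 1, J_{n,n} = n^{-ν/2} for n ≥ 2, J_{n,n-1} = −(n/(n−1))^g·(n−1)^{-ν/2} for n ≥ 2, and all other entries 0, and let à = J·Jᵀ (a well-defined banded infinite matrix). Then for every n ≥ 1, the minimum over all real sequences x = (x_k)_{k≥1} with x_k = 0 for k > n of the quantity (1/2)·Σ_{k=1}^∞ ((Ãx)_k − [k=1])², where (Ãx)_k = Σ_j Ã_{k,j} x_j and [k=1] is 1 if k=1 and 0 otherwise, equals ( 2·Σ_{m=1}^{n+1} m^{(2+ν)ζ−1} )^{-1}. -/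

import Mathlib

open Finset

private lemma cg_aux_norm {a : ℝ} (ha : 0 < a) (u v : ℝ) :
    a ^ u * a ^ v = a ^ (u + v) := (Real.rpow_add ha u v).symm

private lemma cg_aux_orth (g ν a b c : ℝ) (ha : 0 < a) (hb : 0 < b) (hc : 0 < c) :
    -(b^g * a^(-g-ν)) * a^(-g)
    + (b^(-ν) + b^(2*g) * a^(-(2*g)-ν)) * b^(-g)
    + -(c^g * b^(-g-ν)) * c^(-g) = 0 := by
  have ra : ∀ u v : ℝ, a ^ u * a ^ v = a ^ (u+v) := cg_aux_norm ha
  have rb : ∀ u v : ℝ, b ^ u * b ^ v = b ^ (u+v) := cg_aux_norm hb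
  have rc : ∀ u v : ℝ, c ^ u * c ^ v = c ^ (u+v) := cg_aux_norm hc
  have ra' : ∀ u v x : ℝ, a ^ u * (a ^ v * x) = a ^ (u+v) * x := by
    intro u v x; rw [← mul_assoc, ra]
  have rb' : ∀ u v x : ℝ, b ^ u * (b ^ v * x) = b ^ (u+v) * x := by
    intro u v x; rw [← mul_assoc, rb]
  have rc' : ∀ u v x : ℝ, c ^ u * (c ^ v * x) = c ^ (u+v) * x := by
    intro u v x; rw [← mul_assoc, rc]
  ring_nf
  simp only [mul_comm, mul_left_comm, mul_assoc, ra, rb, rc, ra', rb', rc']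
  ring_nf
  simp only [Real.rpow_zero]
  ring_nf

private lemma cg_aux_mem (g ν S w q a b c : ℝ) (ha : 0 < a) (hb : 0 < b) (hc : 0 < c) :
    -(b^g * a^(-g-ν)) * (a^(-g) * (a^(ν+2*g) * (S * b^(-(2*g)) + w) + q))
    + (b^(-ν) + b^(2*g) * a^(-(2*g)-ν)) * (b^(-g) * q)
    + -(c^g * b^(-g-ν)) * (c^(-g) * (q - b^(ν+2*g) * w))
    = -(S * b^(-g)) := by
  have ra : ∀ u v : ℝ, a ^ u * a ^ v = a ^ (u+v) := cg_aux_norm ha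
  have rb : ∀ u v : ℝ, b ^ u * b ^ v = b ^ (u+v) := cg_aux_norm hb
  have rc : ∀ u v : ℝ, c ^ u * c ^ v = c ^ (u+v) := cg_aux_norm hc
  have ra' : ∀ u v x : ℝ, a ^ u * (a ^ v * x) = a ^ (u+v) * x := by
    intro u v x; rw [← mul_assoc, ra]
  have rb' : ∀ u v x : ℝ, b ^ u * (b ^ v * x) = b ^ (u+v) * x := by
    intro u v x; rw [← mul_assoc, rb]
  have rc' : ∀ u v x : ℝ, c ^ u * (c ^ v * x) = c ^ (u+v) * x := by
    intro u v x; rw [← mul_assoc, rc]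
  ring_nf
  simp only [mul_comm, mul_left_comm, mul_assoc, ra, rb, rc, ra', rb', rc']
  ring_nf
  simp only [Real.rpow_zero]
  ring_nf
  rw [mul_assoc, rb]
  ring_nf

/-- Exact Conjugate Gradients losses for the explicit lower-bound operator: with the
bidiagonal operator `J` (here `Jmat i j` is the matrix entry `J_{i+1,j+1}`, so
`Jmat 0 0 = 1`, `Jmat i i = (i+1)^{-ν/2}`, `Jmat i (i-1) = -((i+1)/i)^g i^{-ν/2}` with
`g = (1-(2+ν)ζ)/2`) and `Ã = J Jᵀ`, the minimum of `(1/2)‖Ãx - e₁‖²` over sequences `x`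
supported on the first `n` coordinates equals `(2 Σ_{m=1}^{n+1} m^{(2+ν)ζ-1})⁻¹`. -/
theorem cg_discrete_lower_bound_exact_loss
    (ν ζ : ℝ) (hν : 0 < ν) (hζ : 0 < ζ)
    (g : ℝ) (hg : g = (1 - (2 + ν) * ζ) / 2)
    (Jmat : ℕ → ℕ → ℝ)
    (hJ : ∀ i j : ℕ, Jmat i j =
      if j = i then ((i : ℝ) + 1) ^ (-(ν / 2))
      else if j + 1 = i then -((((i : ℝ) + 1) / (i : ℝ)) ^ g * (i : ℝ) ^ (-(ν / 2)))
      else 0)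
    (Amat : ℕ → ℕ → ℝ)
    (hA : ∀ i j : ℕ, Amat i j = ∑' m : ℕ, Jmat i m * Jmat j m)
    (n : ℕ) (hn : 1 ≤ n) :
    IsLeast
      {L : ℝ | ∃ x : ℕ → ℝ, (∀ k : ℕ, n ≤ k → x k = 0) ∧
        L = (1/2) * ∑' k : ℕ,
          ((∑' j : ℕ, Amat k j * x j) - (if k = 0 then (1:ℝ) else 0)) ^ 2}
      ((2 * ∑ m ∈ Finset.range (n + 1), ((m : ℝ) + 1) ^ ((2 + ν) * ζ - 1))⁻¹) := by
  classical
  have hexp : (2 + ν) * ζ - 1 = -(2*g) := by rw [hg]; ring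
  have hcast : ∀ m : ℕ, (0:ℝ) < (m:ℝ) + 1 := fun m => by positivity
  set p : ℕ → ℝ := fun m => ((m:ℝ)+1) ^ (-(2*g)) with hp_def
  set ρ : ℕ → ℝ := fun k => ((k:ℝ)+1) ^ (-g) with hρ_def
  set S : ℝ := ∑ m ∈ Finset.range (n+1), p m with hS_def
  have hpρ : ∀ m : ℕ, ρ m ^ 2 = p m := by
    intro m
    simp only [hp_def, hρ_def, sq]
    rw [cg_aux_norm (hcast m)]
    congr 1
    ring
  have hppos : ∀ m : ℕ, 0 < p m := fun m => by
    simp only [hp_def]; exact Real.rpow_pos_of_pos (hcast m) _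
  have hS : 0 < S := by
    rw [hS_def]; exact Finset.sum_pos (fun m _ => hppos m) (by simp)
  have hgoal : (2 * ∑ m ∈ Finset.range (n + 1), ((m : ℝ) + 1) ^ ((2 + ν) * ζ - 1))⁻¹
      = (2 * S)⁻¹ := by
    rw [hS_def]
    congr 2
    refine Finset.sum_congr rfl (fun m _ => ?_)
    rw [hexp, hp_def]
  rw [hgoal]
  clear_value p ρ S
  -- structure of J
  have hJ0 : ∀ i m : ℕ, m ≠ i → m + 1 ≠ i → Jmat i m = 0 := by
    intro i m h1 h2; rw [hJ]; simp [h1, h2]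
  have hJd : ∀ i : ℕ, Jmat i i = ((i:ℝ)+1) ^ (-(ν/2)) := by
    intro i; rw [hJ]; simp
  have hJl : ∀ i : ℕ, Jmat (i+1) i
      = -(((i:ℝ)+2) ^ g * (((i:ℝ)+1) ^ (-g) * ((i:ℝ)+1) ^ (-(ν/2)))) := by
    intro i; rw [hJ]
    have h1 : (i:ℕ) ≠ i + 1 := by omega
    simp only [h1, if_false, if_true]
    push_cast
    rw [show ((i:ℝ)+1+1) = ((i:ℝ)+2) from by ring]
    rw [Real.div_rpow (by positivity) (by positivity : (0:ℝ) ≤ (i:ℝ)+1),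
      Real.rpow_neg (by positivity : (0:ℝ) ≤ (i:ℝ)+1) g]
    ring
  -- rows of A
  have hArow0 : ∀ j : ℕ, Amat 0 j = Jmat 0 0 * Jmat j 0 := by
    intro j; rw [hA]
    rw [tsum_eq_sum (s := ({0} : Finset ℕ)) ?_]
    · simp
    · intro m hm
      simp only [Finset.mem_singleton] at hm
      rw [hJ0 0 m hm (by omega), zero_mul]
  have hArowS : ∀ i j : ℕ, Amat (i+1) j
      = Jmat (i+1) i * Jmat j i + Jmat (i+1) (i+1) * Jmat j (i+1) := by
    intro i j; rw [hA]
    rw [tsum_eq_sum (s := ({i, i+1} : Finset ℕ)) ?_]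
    · rw [Finset.sum_insert (by simp), Finset.sum_singleton]
    · intro m hm
      simp only [Finset.mem_insert, Finset.mem_singleton, not_or] at hm
      rw [hJ0 (i+1) m hm.2 (by omega), zero_mul]
  -- entries of A
  have eD0 : Amat 0 0 = 1 := by
    rw [hArow0 0, hJd 0]
    norm_num
  have eL : ∀ i : ℕ, Amat (i+1) i = -(((i:ℝ)+2) ^ g * ((i:ℝ)+1) ^ (-g-ν)) := by
    intro i
    rw [hArowS i i, hJ0 i (i+1) (by omega) (by omega), mul_zero, add_zero, hJl i, hJd i]
    have h1 : ((i:ℝ)+1) ^ (-g) * ((i:ℝ)+1) ^ (-(ν/2)) * ((i:ℝ)+1) ^ (-(ν/2))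
        = ((i:ℝ)+1) ^ (-g-ν) := by
      rw [cg_aux_norm (hcast i), cg_aux_norm (hcast i)]
      congr 1
      ring
    linear_combination (-(((i:ℝ)+2) ^ g)) * h1
  have eU : ∀ i : ℕ, Amat i (i+1) = -(((i:ℝ)+2) ^ g * ((i:ℝ)+1) ^ (-g-ν)) := by
    intro i
    match i with
    | 0 =>
      rw [hArow0 1, hJd 0, hJl 0]
      norm_num
    | (i+1) =>
      rw [hArowS i (i+2), hJ0 (i+2) i (by omega) (by omega), mul_zero, zero_add,
        hJd (i+1), hJl (i+1)]
      push_cast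
      rw [show ((i:ℝ)+1+1) = ((i:ℝ)+2) from by ring,
        show ((i:ℝ)+1+2) = ((i:ℝ)+3) from by ring]
      have hb : (0:ℝ) < (i:ℝ)+2 := by positivity
      have h1 : ((i:ℝ)+2) ^ (-(ν/2)) * (((i:ℝ)+2) ^ (-g) * ((i:ℝ)+2) ^ (-(ν/2)))
          = ((i:ℝ)+2) ^ (-g-ν) := by
        rw [← mul_assoc, cg_aux_norm hb, cg_aux_norm hb]
        congr 1
        ring
      linear_combination (-(((i:ℝ)+3) ^ g)) * h1
  have eD : ∀ i : ℕ, Amat (i+1) (i+1)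
      = ((i:ℝ)+2) ^ (-ν) + ((i:ℝ)+2) ^ (2*g) * ((i:ℝ)+1) ^ (-(2*g)-ν) := by
    intro i
    rw [hArowS i (i+1), hJd (i+1), hJl i]
    push_cast
    rw [show ((i:ℝ)+1+1) = ((i:ℝ)+2) from by ring]
    have ha : (0:ℝ) < (i:ℝ)+1 := hcast i
    have hb : (0:ℝ) < (i:ℝ)+2 := by positivity
    have h1 : (((i:ℝ)+1) ^ (-g) * ((i:ℝ)+1) ^ (-(ν/2)))
        * (((i:ℝ)+1) ^ (-g) * ((i:ℝ)+1) ^ (-(ν/2))) = ((i:ℝ)+1) ^ (-(2*g)-ν) := by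
      rw [cg_aux_norm ha, cg_aux_norm ha]
      congr 1
      ring
    have h2 : ((i:ℝ)+2) ^ g * ((i:ℝ)+2) ^ g = ((i:ℝ)+2) ^ (2*g) := by
      rw [cg_aux_norm hb]
      congr 1
      ring
    have h3 : ((i:ℝ)+2) ^ (-(ν/2)) * ((i:ℝ)+2) ^ (-(ν/2)) = ((i:ℝ)+2) ^ (-ν) := by
      rw [cg_aux_norm hb]
      congr 1
      ring
    linear_combination h3 + (((i:ℝ)+1) ^ (-g) * ((i:ℝ)+1) ^ (-(ν/2))
      * (((i:ℝ)+1) ^ (-g) * ((i:ℝ)+1) ^ (-(ν/2)))) * h2 + (((i:ℝ)+2) ^ (2*g)) * h1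
  -- band structure
  have ezR : ∀ k j : ℕ, k + 2 ≤ j → Amat k j = 0 := by
    intro k j hkj
    match k with
    | 0 =>
      rw [hArow0 j, hJ0 j 0 (by omega) (by omega), mul_zero]
    | (i+1) =>
      rw [hArowS i j, hJ0 j i (by omega) (by omega), hJ0 j (i+1) (by omega) (by omega)]
      ring
  have ezL : ∀ k j : ℕ, j + 2 ≤ k → Amat k j = 0 := by
    intro k j hkj
    match k, hkj with
    | (i+1), hkj =>
      rw [hArowS i j, hJ0 j i (by omega) (by omega), hJ0 j (i+1) (by omega) (by omega)]
      ring
  -- reduction of tsums to finite sums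
  have hinner : ∀ (x : ℕ → ℝ), (∀ k, n ≤ k → x k = 0) → ∀ k : ℕ,
      (∑' j : ℕ, Amat k j * x j) = ∑ j ∈ Finset.range n, Amat k j * x j := by
    intro x hx k
    refine tsum_eq_sum (fun j hj => ?_)
    rw [hx j (by simpa using hj), mul_zero]
  have houter : ∀ (x : ℕ → ℝ), (∀ k, n ≤ k → x k = 0) →
      (∑' k : ℕ, ((∑' j : ℕ, Amat k j * x j) - (if k = 0 then (1:ℝ) else 0)) ^ 2)
      = ∑ k ∈ Finset.range (n+1),
          ((∑ j ∈ Finset.range n, Amat k j * x j) - (if k = 0 then (1:ℝ) else 0)) ^ 2 := by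
    intro x hx
    have h1 : ∀ k : ℕ, (∑' j : ℕ, Amat k j * x j) = ∑ j ∈ Finset.range n, Amat k j * x j :=
      hinner x hx
    simp only [h1]
    refine tsum_eq_sum (fun k hk => ?_)
    have hk' : n + 1 ≤ k := by simpa using hk
    have hz : ∑ j ∈ Finset.range n, Amat k j * x j = 0 := by
      refine Finset.sum_eq_zero (fun j hj => ?_)
      have hj' : j < n := by simpa using hj
      rw [ezL k j (by omega), zero_mul]
    rw [hz, if_neg (by omega)]
    ring
  -- column orthogonality
  have colsum : ∀ j : ℕ, j < n → ∑ k ∈ Finset.range (n+1), Amat k j * ρ k = 0 := by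
    intro j hj
    match j with
    | 0 =>
      have hsub : ({0, 1} : Finset ℕ) ⊆ Finset.range (n+1) := by
        intro k hk; simp at hk; simp; omega
      have hzero : ∀ k ∈ Finset.range (n+1), k ∉ ({0, 1} : Finset ℕ) →
          Amat k 0 * ρ k = 0 := by
        intro k _ hk
        simp only [Finset.mem_insert, Finset.mem_singleton, not_or] at hk
        rw [ezL k 0 (by omega), zero_mul]
      rw [← Finset.sum_subset hsub hzero]
      rw [Finset.sum_insert (by simp), Finset.sum_singleton]
      have e1 := eL 0
      norm_num at e1
      rw [eD0, e1]
      simp only [hρ_def]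
      norm_num
      have h2 : (2:ℝ) ^ g * (2:ℝ) ^ (-g) = 1 := by
        rw [cg_aux_norm (by norm_num : (0:ℝ) < 2)]
        norm_num
      linarith
    | (i+1) =>
      have hsub : ({i, i+1, i+2} : Finset ℕ) ⊆ Finset.range (n+1) := by
        intro k hk; simp at hk; simp; omega
      have hzero : ∀ k ∈ Finset.range (n+1), k ∉ ({i, i+1, i+2} : Finset ℕ) →
          Amat k (i+1) * ρ k = 0 := by
        intro k _ hk
        simp only [Finset.mem_insert, Finset.mem_singleton, not_or] at hk
        rcases Nat.lt_or_ge k i with h | h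
        · rw [ezR k (i+1) (by omega), zero_mul]
        · rw [ezL k (i+1) (by omega), zero_mul]
      rw [← Finset.sum_subset hsub hzero]
      rw [Finset.sum_insert (by simp), Finset.sum_insert (by simp), Finset.sum_singleton]
      rw [eU i, eD i, eL (i+1)]
      simp only [hρ_def]
      push_cast
      rw [show ((i:ℝ)+1+1) = ((i:ℝ)+2) from by ring,
        show ((i:ℝ)+1+2) = ((i:ℝ)+3) from by ring,
        show ((i:ℝ)+2+1) = ((i:ℝ)+3) from by ring]
      have key := cg_aux_orth g ν ((i:ℝ)+1) ((i:ℝ)+2) ((i:ℝ)+3)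
        (hcast i) (by positivity) (by positivity)
      linear_combination key
  constructor
  · -- membership : the explicit minimizer
    set w : ℕ → ℝ := fun i => S⁻¹ * ∑ m ∈ Finset.Ico (i+1) (n+1), p m with hw_def
    set q : ℕ → ℝ := fun j => ∑ i ∈ Finset.Ico j n, ((i:ℝ)+1) ^ (ν+2*g) * w i with hq_def
    set x : ℕ → ℝ := fun j => ((j:ℝ)+1) ^ (-g) * q j with hx_def
    have hwsupp : ∀ i : ℕ, n ≤ i → w i = 0 := by
      intro i hi
      simp only [hw_def]
      rw [Finset.Ico_eq_empty (by omega), Finset.sum_empty, mul_zero]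
    have hqsupp : ∀ j : ℕ, n ≤ j → q j = 0 := by
      intro j hjn
      simp only [hq_def]
      rw [Finset.Ico_eq_empty (by omega), Finset.sum_empty]
    have hxs : ∀ k : ℕ, n ≤ k → x k = 0 := by
      intro k hk
      simp only [hx_def]
      rw [hqsupp k hk, mul_zero]
    have hq_rec : ∀ j : ℕ, q j = ((j:ℝ)+1) ^ (ν+2*g) * w j + q (j+1) := by
      intro j
      rcases Nat.lt_or_ge j n with h | h
      · simp only [hq_def]
        rw [Finset.sum_eq_sum_Ico_succ_bot h]
      · rw [hqsupp j h, hqsupp (j+1) (by omega), hwsupp j h]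
        ring
    have hw_rec : ∀ i : ℕ, i < n → w i = S⁻¹ * p (i+1) + w (i+1) := by
      intro i hi
      simp only [hw_def]
      rw [Finset.sum_eq_sum_Ico_succ_bot (by omega : i + 1 < n + 1)]
      ring
    have hw0 : w 0 = 1 - S⁻¹ := by
      have h1 : S = p 0 + ∑ m ∈ Finset.Ico 1 (n+1), p m := by
        rw [hS_def, Finset.range_eq_Ico, Finset.sum_eq_sum_Ico_succ_bot (by omega : 0 < n + 1)]
      have hp0 : p 0 = 1 := by
        simp only [hp_def]; norm_num
      have h2 : ∑ m ∈ Finset.Ico 1 (n+1), p m = S - 1 := by rw [h1, hp0]; ring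
      simp only [hw_def]
      norm_num
      rw [h2]
      field_simp
    clear_value w q x
    refine ⟨x, hxs, ?_⟩
    rw [houter x hxs]
    have hFx : ∀ k : ℕ, k ≤ n →
        (∑ j ∈ Finset.range n, Amat k j * x j)
        = (if k = 0 then (1:ℝ) else 0) - S⁻¹ * ρ k := by
      intro k hk
      have hext : (∑ j ∈ Finset.range n, Amat k j * x j)
          = ∑ j ∈ Finset.range (n+2), Amat k j * x j := by
        refine Finset.sum_subset (by intro j hj; simp at hj ⊢; omega) (fun j _ hj => ?_)
        have hjn : n ≤ j := by simp at hj ⊢; omega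
        rw [hxs j hjn, mul_zero]
      rw [hext]
      match k, hk with
      | 0, _ =>
        have hsub : ({0, 1} : Finset ℕ) ⊆ Finset.range (n+2) := by
          intro k hk; simp at hk; simp; omega
        have hzero : ∀ j ∈ Finset.range (n+2), j ∉ ({0, 1} : Finset ℕ) →
            Amat 0 j * x j = 0 := by
          intro j _ hj
          simp only [Finset.mem_insert, Finset.mem_singleton, not_or] at hj
          rw [ezR 0 j (by omega), zero_mul]
        rw [← Finset.sum_subset hsub hzero]
        rw [Finset.sum_insert (by simp), Finset.sum_singleton]
        have e1 := eU 0
        norm_num at e1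
        rw [eD0, e1]
        rw [if_pos rfl]
        rw [hx_def]
        simp only []
        rw [hq_rec 0, hw0]
        push_cast
        norm_num
        simp only [hρ_def]
        norm_num
        have h2g : (2:ℝ) ^ g * (2:ℝ) ^ (-g) = 1 := by
          rw [cg_aux_norm (by norm_num : (0:ℝ) < 2)]
          norm_num
        linear_combination (-(q 1)) * h2g
      | (i+1), hk =>
        have hsub : ({i, i+1, i+2} : Finset ℕ) ⊆ Finset.range (n+2) := by
          intro k hk2; simp at hk2; simp; omega
        have hzero : ∀ j ∈ Finset.range (n+2), j ∉ ({i, i+1, i+2} : Finset ℕ) →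
            Amat (i+1) j * x j = 0 := by
          intro j _ hj
          simp only [Finset.mem_insert, Finset.mem_singleton, not_or] at hj
          rcases Nat.lt_or_ge j i with h | h
          · rw [ezL (i+1) j (by omega), zero_mul]
          · rw [ezR (i+1) j (by omega), zero_mul]
        rw [← Finset.sum_subset hsub hzero]
        rw [Finset.sum_insert (by simp), Finset.sum_insert (by simp), Finset.sum_singleton]
        rw [eL i, eD i, eU (i+1)]
        rw [hx_def]
        simp only []
        rw [hq_rec i, hw_rec i (by omega)]
        have hq2 : q (i+2) = q (i+1) - ((i:ℝ)+2) ^ (ν+2*g) * w (i+1) := by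
          have h := hq_rec (i+1)
          push_cast at h
          rw [show ((i:ℝ)+1+1) = ((i:ℝ)+2) from by ring] at h
          linarith
        rw [hq2]
        simp only [hp_def, hρ_def]
        rw [if_neg (by omega)]
        push_cast
        rw [show ((i:ℝ)+1+1) = ((i:ℝ)+2) from by ring,
          show ((i:ℝ)+1+2) = ((i:ℝ)+3) from by ring,
          show ((i:ℝ)+2+1) = ((i:ℝ)+3) from by ring]
        have key := cg_aux_mem g ν S⁻¹ (w (i+1)) (q (i+1)) ((i:ℝ)+1) ((i:ℝ)+2) ((i:ℝ)+3)
          (hcast i) (by positivity) (by positivity)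
        linear_combination key
    have hsum : ∀ k ∈ Finset.range (n+1),
        ((∑ j ∈ Finset.range n, Amat k j * x j) - (if k = 0 then (1:ℝ) else 0)) ^ 2
        = S⁻¹ * S⁻¹ * p k := by
      intro k hk
      have hk' : k ≤ n := by simp at hk; omega
      rw [hFx k hk']
      rw [← hpρ k]
      ring
    rw [Finset.sum_congr rfl hsum, ← Finset.mul_sum, ← hS_def]
    rw [mul_inv]
    field_simp
  · -- lower bound
    rintro L ⟨x, hx, rfl⟩
    rw [houter x hx]
    set F : ℕ → ℝ := fun k =>
      (∑ j ∈ Finset.range n, Amat k j * x j) - (if k = 0 then (1:ℝ) else 0) with hF_def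
    clear_value F
    have key : ∑ k ∈ Finset.range (n+1), F k * ρ k = -1 := by
      simp only [hF_def, sub_mul, Finset.sum_sub_distrib]
      have h1 : ∑ k ∈ Finset.range (n+1), (∑ j ∈ Finset.range n, Amat k j * x j) * ρ k = 0 := by
        have hrw : ∀ k, (∑ j ∈ Finset.range n, Amat k j * x j) * ρ k
            = ∑ j ∈ Finset.range n, Amat k j * ρ k * x j := by
          intro k; rw [Finset.sum_mul]; refine Finset.sum_congr rfl (fun j _ => by ring)
        simp only [hrw]
        rw [Finset.sum_comm]
        refine Finset.sum_eq_zero (fun j hj => ?_)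
        have hj' : j < n := by simpa using hj
        have hpull : ∑ k ∈ Finset.range (n+1), Amat k j * ρ k * x j
            = (∑ k ∈ Finset.range (n+1), Amat k j * ρ k) * x j := by
          rw [Finset.sum_mul]
        rw [hpull, colsum j hj', zero_mul]
      have h2 : ∑ k ∈ Finset.range (n+1), (if k = 0 then (1:ℝ) else 0) * ρ k = 1 := by
        rw [Finset.sum_eq_single 0]
        · rw [if_pos rfl, one_mul]
          simp only [hρ_def]
          norm_num
        · intro k _ hk; rw [if_neg hk, zero_mul]
        · intro h; simp at h
      rw [h1, h2]; ring
    have hρS : ∑ k ∈ Finset.range (n+1), ρ k ^ 2 = S := by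
      rw [hS_def]
      exact Finset.sum_congr rfl (fun k _ => hpρ k)
    have cs := Finset.sum_mul_sq_le_sq_mul_sq (Finset.range (n+1)) F ρ
    rw [key, hρS] at cs
    have h1le : (1:ℝ) ≤ (∑ k ∈ Finset.range (n+1), F k ^ 2) * S := by nlinarith [cs]
    have hFS : S⁻¹ ≤ ∑ k ∈ Finset.range (n+1), F k ^ 2 := by
      rw [inv_eq_one_div, div_le_iff₀ hS]
      linarith
    rw [mul_inv]
    have h12 : (2:ℝ)⁻¹ = 1/2 := by norm_num
    rw [h12]
    have hgoalsum : ∑ k ∈ Finset.range (n+1),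
        ((∑ j ∈ Finset.range n, Amat k j * x j) - (if k = 0 then (1:ℝ) else 0)) ^ 2
        = ∑ k ∈ Finset.range (n+1), F k ^ 2 := by
      refine Finset.sum_congr rfl (fun k _ => ?_)
      simp only [hF_def]
    linarith [hFS, hgoalsum]
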